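/- Intersection of CPZs via constraint augmentation: for two CPZs CPZ₁ = ⟨c₁,G₁,E₁,A₁,b₁,R₁⟩ and CPZ₂ = ⟨c₂,G₂,E₂,A₂,b₂,R₂⟩ with p₁ and p₂ factors, their intersection CPZ₁ ∩ CPZ₂ equals the CPZ with p₁+p₂ factors, starting point c₁, generators G₁, exponents [E₁;0], and constraints given by: Σᵢ α^{R₁-cols} A₁_{·,i} = b₁ (on the first p₁ factors), Σᵢ α^{R₂-cols} A₂_{·,i} = b₂ (on the last p₂ factors), and c₁ + Σᵢ α^{E₁-cols} G₁_{·,i} = c₂ + Σᵢ α^{E₂-cols} G₂_{·,i}. -/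
import Mathlib


open Finset Matrix Set

noncomputable section

/-- Monomial `∏ k, α k ^ e k`. -/
def mono {p : Type*} [Fintype p] (α : p → ℝ) (e : p → ℕ) : ℝ := ∏ k, α k ^ e k

/-- All factors lie in `[-1,1]`. -/
def inBox {p : Type*} (α : p → ℝ) : Prop := ∀ k, α k ∈ Set.Icc (-1 : ℝ) 1

/-- Constrained polynomial zonotope. -/
def CPZ {n p h m q : Type*} [Fintype n] [Fintype p] [Fintype h] [Fintype m] [Fintype q]
    (c : n → ℝ) (G : Matrix n h ℝ) (E : Matrix p h ℕ)
    (A : Matrix m q ℝ) (b : m → ℝ) (R : Matrix p q ℕ) : Set (n → ℝ) :=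
  {x | ∃ α : p → ℝ, inBox α ∧
    (∑ i, mono α (fun k => R k i) • (fun j => A j i)) = b ∧
    x = c + ∑ i, mono α (fun k => E k i) • (fun j => G j i)}
variable {n p₁ p₂ h₁ h₂ m₁ m₂ q₁ q₂ : ℕ}

/-- Exponent matrix [E₁;0] of the intersection CPZ. -/
def interE (E₁ : Matrix (Fin p₁) (Fin h₁) ℕ) :
    Matrix (Fin p₁ ⊕ Fin p₂) (Fin h₁) ℕ :=
  fun k i => match k with
    | .inl kk => E₁ kk i
    | .inr _ => 0

/-- Constraint matrix of the intersection CPZ. -/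
def interA (A₁ : Matrix (Fin m₁) (Fin q₁) ℝ) (A₂ : Matrix (Fin m₂) (Fin q₂) ℝ)
    (G₁ : Matrix (Fin n) (Fin h₁) ℝ) (G₂ : Matrix (Fin n) (Fin h₂) ℝ) :
    Matrix ((Fin m₁ ⊕ Fin m₂) ⊕ Fin n) ((Fin q₁ ⊕ Fin q₂) ⊕ (Fin h₁ ⊕ Fin h₂)) ℝ :=
  fun r j => match r, j with
    | .inl (.inl rr), .inl (.inl jj) => A₁ rr jj
    | .inl (.inr rr), .inl (.inr jj) => A₂ rr jj
    | .inr rr, .inr (.inl jj) => G₁ rr jj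
    | .inr rr, .inr (.inr jj) => -G₂ rr jj
    | _, _ => 0

/-- Constraint exponent matrix of the intersection CPZ. -/
def interR (R₁ : Matrix (Fin p₁) (Fin q₁) ℕ) (R₂ : Matrix (Fin p₂) (Fin q₂) ℕ)
    (E₁ : Matrix (Fin p₁) (Fin h₁) ℕ) (E₂ : Matrix (Fin p₂) (Fin h₂) ℕ) :
    Matrix (Fin p₁ ⊕ Fin p₂) ((Fin q₁ ⊕ Fin q₂) ⊕ (Fin h₁ ⊕ Fin h₂)) ℕ :=
  fun k j => match k, j with
    | .inl kk, .inl (.inl jj) => R₁ kk jj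
    | .inr kk, .inl (.inr jj) => R₂ kk jj
    | .inl kk, .inr (.inl jj) => E₁ kk jj
    | .inr kk, .inr (.inr jj) => E₂ kk jj
    | _, _ => 0

lemma mono_split {p₁ p₂ : ℕ} (α : Fin p₁ ⊕ Fin p₂ → ℝ) (e : Fin p₁ ⊕ Fin p₂ → ℕ) :
    mono α e = mono (fun k => α (.inl k)) (fun k => e (.inl k)) *
      mono (fun k => α (.inr k)) (fun k => e (.inr k)) := by
  simp [mono, Fintype.prod_sum_type]

lemma mono_zero {p : Type*} [Fintype p] (α : p → ℝ) : mono α (fun _ => 0) = 1 := by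
  simp [mono]

/-- Intersection of two CPZs via constraint augmentation. -/
theorem CPZ_intersection
    (c₁ : Fin n → ℝ) (G₁ : Matrix (Fin n) (Fin h₁) ℝ) (E₁ : Matrix (Fin p₁) (Fin h₁) ℕ)
    (A₁ : Matrix (Fin m₁) (Fin q₁) ℝ) (b₁ : Fin m₁ → ℝ) (R₁ : Matrix (Fin p₁) (Fin q₁) ℕ)
    (c₂ : Fin n → ℝ) (G₂ : Matrix (Fin n) (Fin h₂) ℝ) (E₂ : Matrix (Fin p₂) (Fin h₂) ℕ)
    (A₂ : Matrix (Fin m₂) (Fin q₂) ℝ) (b₂ : Fin m₂ → ℝ) (R₂ : Matrix (Fin p₂) (Fin q₂) ℕ) :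
    CPZ c₁ G₁ E₁ A₁ b₁ R₁ ∩ CPZ c₂ G₂ E₂ A₂ b₂ R₂ =
    CPZ c₁ G₁ (interE (p₂ := p₂) E₁) (interA A₁ A₂ G₁ G₂)
      (Sum.elim (Sum.elim b₁ b₂) (c₂ - c₁)) (interR R₁ R₂ E₁ E₂) := by
  ext x
  simp only [Set.mem_inter_iff, CPZ, Set.mem_setOf_eq]
  constructor
  · rintro ⟨⟨α₁, hb₁, hA₁, hx₁⟩, ⟨α₂, hb₂, hA₂, hx₂⟩⟩
    refine ⟨Sum.elim α₁ α₂, ?_, ?_, ?_⟩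
    · rintro (k|k); exacts [hb₁ k, hb₂ k]
    · funext r
      rcases r with (rr | rr) | rr
      · have h := congrFun hA₁ rr
        simp only [Finset.sum_apply, Pi.smul_apply, smul_eq_mul] at h ⊢
        simp [Fintype.sum_sum_type, interA, interR, mono_split, mono_zero, h]
      · have h := congrFun hA₂ rr
        simp only [Finset.sum_apply, Pi.smul_apply, smul_eq_mul] at h ⊢
        simp [Fintype.sum_sum_type, interA, interR, mono_split, mono_zero, h]
      · have h1 := congrFun hx₁ rr
        have h2 := congrFun hx₂ rr
        simp only [Pi.add_apply, Finset.sum_apply, Pi.smul_apply, smul_eq_mul] at h1 h2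
        simp only [Finset.sum_apply, Pi.smul_apply, smul_eq_mul]
        simp only [Fintype.sum_sum_type]
        simp only [interA, interR, mono_split, mono_zero]
        simp only [mul_one, one_mul, mul_zero, zero_mul, mul_neg, Finset.sum_const_zero,
          add_zero, zero_add, Finset.sum_neg_distrib, Sum.elim_inl, Sum.elim_inr, Pi.sub_apply]
        ring_nf
        ring_nf at h1 h2
        linarith [h1, h2]
    · funext j
      have h1 := congrFun hx₁ j
      simp only [Pi.add_apply, Finset.sum_apply, Pi.smul_apply, smul_eq_mul] at h1 ⊢
      simp [interE, mono_split, mono_zero, h1]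
  · rintro ⟨α, hb, hA, hx⟩
    have hA1 : ∀ rr, ∑ jj, mono (fun k => α (.inl k)) (fun k => R₁ k jj) * A₁ rr jj = b₁ rr := by
      intro rr
      have h := congrFun hA (Sum.inl (Sum.inl rr))
      simp only [Finset.sum_apply, Pi.smul_apply, smul_eq_mul] at h
      simpa [Fintype.sum_sum_type, interA, interR, mono_split, mono_zero] using h
    have hA2 : ∀ rr, ∑ jj, mono (fun k => α (.inr k)) (fun k => R₂ k jj) * A₂ rr jj = b₂ rr := by
      intro rr
      have h := congrFun hA (Sum.inl (Sum.inr rr))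
      simp only [Finset.sum_apply, Pi.smul_apply, smul_eq_mul] at h
      simpa [Fintype.sum_sum_type, interA, interR, mono_split, mono_zero] using h
    have hG : ∀ rr, (∑ jj, mono (fun k => α (.inl k)) (fun k => E₁ k jj) * G₁ rr jj)
        - (∑ jj, mono (fun k => α (.inr k)) (fun k => E₂ k jj) * G₂ rr jj) = c₂ rr - c₁ rr := by
      intro rr
      have h := congrFun hA (Sum.inr rr)
      simp only [Finset.sum_apply, Pi.smul_apply, smul_eq_mul] at h
      simp only [Fintype.sum_sum_type, interA, interR] at h
      simp only [mono_split] at h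
      simp only [mono_zero, mul_one, one_mul, mul_zero, zero_mul, mul_neg,
        Finset.sum_const_zero, add_zero, zero_add, Finset.sum_neg_distrib,
        Sum.elim_inl, Sum.elim_inr, Pi.sub_apply] at h
      linarith [h]
    have hx1 : ∀ j, x j = c₁ j + ∑ i, mono (fun k => α (.inl k)) (fun k => E₁ k i) * G₁ j i := by
      intro j
      have h := congrFun hx j
      simp only [Pi.add_apply, Finset.sum_apply, Pi.smul_apply, smul_eq_mul] at h
      simpa [interE, mono_split, mono_zero] using h
    refine ⟨⟨fun k => α (.inl k), fun k => hb _, ?_, ?_⟩,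
            ⟨fun k => α (.inr k), fun k => hb _, ?_, ?_⟩⟩
    · funext rr
      simpa only [Finset.sum_apply, Pi.smul_apply, smul_eq_mul] using hA1 rr
    · funext j
      simpa only [Pi.add_apply, Finset.sum_apply, Pi.smul_apply, smul_eq_mul] using hx1 j
    · funext rr
      simpa only [Finset.sum_apply, Pi.smul_apply, smul_eq_mul] using hA2 rr
    · funext j
      simp only [Pi.add_apply, Finset.sum_apply, Pi.smul_apply, smul_eq_mul]
      have := hG j
      have := hx1 j
      linarith
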